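/- Let m̄, m̿ and m* be finite MDP models over the same finite state space S, finite action space A, and discount factor γ ∈ [0,1). Let π_{m̄}^r be a rollout policy of some base policy in m̄, let π_{m̄}^ce be a certainty-equivalence policy in m̄, and let π_{m̿}^r, π_{m̿}^ce be defined analogously for m̿. If m̿ is a performance-minimizing model (PNM) of m* with respect to Π̿ = {π_{m̿}^r, π_{m̿}^ce} and J, then J_{m*}^{π_{m̄}^r} ≥ J_{m*}^{π_{m̿}^ce} (in particular, this holds whether m̄ is a PCM or a PRM of m* with respect to Π̄ = {π_{m̄}^r, π_{m̄}^ce} and J). -/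

import Mathlib

/-- A finite Markov decision process model over state space `S` and action space `A`:
a transition kernel `p`, a reward function `r`, and an initial state distribution `d`. -/
structure MDP (S A : Type) where
  p : S → A → PMF S
  r : S → A → S → ℝ
  d : PMF S

variable {S A : Type}

/-- The expected one-step value `Σ_{s'} p(s,a)(s') (r(s,a,s') + γ V(s'))`. -/
noncomputable def expVal [Fintype S] (m : MDP S A) (γ : ℝ) (V : S → ℝ) (s : S) (a : A) : ℝ :=
  ∑ s' : S, (m.p s a s').toReal * (m.r s a s' + γ * V s')

/-- The Bellman evaluation operator `T_m^π` of policy `π` in model `m`. -/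
noncomputable def bellman [Fintype S] [Fintype A] (m : MDP S A) (γ : ℝ)
    (π : S → PMF A) (V : S → ℝ) (s : S) : ℝ :=
  ∑ a : A, (π s a).toReal * expVal m γ V s a

/-- `V` is the value function `V_m^π`, i.e. a fixed point of the Bellman evaluation
operator `T_m^π` (which is unique since `T_m^π` is a `γ`-contraction for `γ < 1`). -/
def IsValueFun [Fintype S] [Fintype A] (m : MDP S A) (γ : ℝ) (π : S → PMF A)
    (V : S → ℝ) : Prop :=
  ∀ s, bellman m γ π V s = V s

/-- The optimal Bellman operator `T_m^*`. -/
noncomputable def optBellman [Fintype S] [Fintype A] [Nonempty A] (m : MDP S A) (γ : ℝ)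
    (V : S → ℝ) (s : S) : ℝ :=
  Finset.univ.sup' Finset.univ_nonempty (fun a : A => expVal m γ V s a)

/-- `V` is the optimal value function `V_m^*`, i.e. a fixed point of `T_m^*`. -/
def IsOptValueFun [Fintype S] [Fintype A] [Nonempty A] (m : MDP S A) (γ : ℝ)
    (V : S → ℝ) : Prop :=
  ∀ s, optBellman m γ V s = V s

/-- The performance `J_m^π = Σ_s d(s) V_m^π(s)`, expressed via the value function `V` of `π`. -/
noncomputable def Jval [Fintype S] (m : MDP S A) (V : S → ℝ) : ℝ :=
  ∑ s : S, (m.d s).toReal * V s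

/-- The deterministic (stochastic) policy induced by a map `S → A`. -/
noncomputable def detPol (f : S → A) : S → PMF A := fun s => PMF.pure (f s)

/-- A deterministic policy `g` is greedy with respect to the one-step values induced by `V`
in model `m`: at each state it picks a maximizing action.  With `V = V_m^{π^b}` this says `g`
is a rollout policy of `π^b`; with `V = V_m^*` this says `g` is a certainty-equivalence policy. -/
def IsGreedyWrt [Fintype S] (m : MDP S A) (γ : ℝ) (V : S → ℝ) (g : S → A) : Prop :=
  ∀ s a, expVal m γ V s a ≤ expVal m γ V s (g s)

/-- `m` is a performance-contrasting model (PCM) of `mstar` w.r.t. a set `P` of policies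
and `J`: whenever `J_m^{πi} ≥ J_m^{πj}` for `πi, πj ∈ P`, we have `J_{m*}^{πi} ≤ J_{m*}^{πj}`. -/
def IsPCM [Fintype S] [Fintype A] (m mstar : MDP S A) (γ : ℝ)
    (P : Set (S → PMF A)) : Prop :=
  ∀ πi ∈ P, ∀ πj ∈ P, ∀ Vi Vj Wi Wj : S → ℝ,
    IsValueFun m γ πi Vi → IsValueFun m γ πj Vj →
    IsValueFun mstar γ πi Wi → IsValueFun mstar γ πj Wj →
    Jval m Vi ≥ Jval m Vj → Jval mstar Wi ≤ Jval mstar Wj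

/-- `m` is a performance-resembling model (PRM) of `mstar` w.r.t. a set `P` of policies
and `J`: whenever `J_m^{πi} ≥ J_m^{πj}` for `πi, πj ∈ P`, we have `J_{m*}^{πi} ≥ J_{m*}^{πj}`. -/
def IsPRM [Fintype S] [Fintype A] (m mstar : MDP S A) (γ : ℝ)
    (P : Set (S → PMF A)) : Prop :=
  ∀ πi ∈ P, ∀ πj ∈ P, ∀ Vi Vj Wi Wj : S → ℝ,
    IsValueFun m γ πi Vi → IsValueFun m γ πj Vj →
    IsValueFun mstar γ πi Wi → IsValueFun mstar γ πj Wj →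
    Jval m Vi ≥ Jval m Vj → Jval mstar Wi ≥ Jval mstar Wj

/-- A policy `π` is optimal in `m` if its value function coincides with `V_m^*`. -/
def IsOptimalIn [Fintype S] [Fintype A] [Nonempty A] (m : MDP S A) (γ : ℝ)
    (π : S → PMF A) : Prop :=
  ∀ V Vstar : S → ℝ, IsValueFun m γ π V → IsOptValueFun m γ Vstar → ∀ s, V s = Vstar s

/-- `m` is a performance-minimizing model (PNM) of `mstar` w.r.t. `P` and `J`: a PCM such
that every policy in `P` optimal in `m` attains the worst possible performance in `mstar`. -/
def IsPNM [Fintype S] [Fintype A] [Nonempty A] (m mstar : MDP S A) (γ : ℝ)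
    (P : Set (S → PMF A)) : Prop :=
  IsPCM m mstar γ P ∧
    ∀ π ∈ P, IsOptimalIn m γ π →
      ∀ (π' : S → PMF A) (W W' : S → ℝ),
        IsValueFun mstar γ π W → IsValueFun mstar γ π' W' →
        Jval mstar W ≤ Jval mstar W'

/-- `m` is a performance-maximizing model (PXM) of `mstar` w.r.t. `P` and `J`: a PRM such
that every policy in `P` optimal in `m` attains the best possible performance in `mstar`. -/
def IsPXM [Fintype S] [Fintype A] [Nonempty A] (m mstar : MDP S A) (γ : ℝ)
    (P : Set (S → PMF A)) : Prop :=
  IsPRM m mstar γ P ∧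
    ∀ π ∈ P, IsOptimalIn m γ π →
      ∀ (π' : S → PMF A) (W W' : S → ℝ),
        IsValueFun mstar γ π W → IsValueFun mstar γ π' W' →
        Jval mstar W ≥ Jval mstar W'

lemma sum_pmf_toReal_one {α : Type} [Fintype α] (p : PMF α) :
    ∑ a : α, (p a).toReal = 1 := by
  have h : ∑ a : α, p a = 1 := by
    rw [← p.tsum_coe, tsum_fintype]
  have hne : ∀ a ∈ Finset.univ, p a ≠ ⊤ := fun a _ => p.apply_ne_top a
  rw [← ENNReal.toReal_sum hne, h, ENNReal.toReal_one]

lemma expVal_diff_le {S A : Type} [Fintype S] (m : MDP S A) (γ : ℝ) (hγ0 : 0 ≤ γ)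
    (V W : S → ℝ) (M : ℝ) (hM : ∀ s, |V s - W s| ≤ M) (s : S) (a : A) :
    |expVal m γ V s a - expVal m γ W s a| ≤ γ * M := by
  have : expVal m γ V s a - expVal m γ W s a
      = ∑ s' : S, (m.p s a s').toReal * (γ * (V s' - W s')) := by
    unfold expVal; rw [← Finset.sum_sub_distrib]; congr 1; ext s'; ring
  rw [this]
  calc |∑ s' : S, (m.p s a s').toReal * (γ * (V s' - W s'))|
      ≤ ∑ s' : S, |(m.p s a s').toReal * (γ * (V s' - W s'))| :=
        Finset.abs_sum_le_sum_abs _ _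
    _ ≤ ∑ s' : S, (m.p s a s').toReal * (γ * M) := by
        apply Finset.sum_le_sum; intro s' _
        rw [abs_mul, abs_of_nonneg ENNReal.toReal_nonneg, abs_mul,
          abs_of_nonneg hγ0]
        exact mul_le_mul_of_nonneg_left
          (mul_le_mul_of_nonneg_left (hM s') hγ0) ENNReal.toReal_nonneg
    _ = γ * M := by rw [← Finset.sum_mul, sum_pmf_toReal_one, one_mul]

lemma bellman_unique {S A : Type} [Fintype S] [Nonempty S] [Fintype A]
    (m : MDP S A) (γ : ℝ) (hγ0 : 0 ≤ γ) (hγ1 : γ < 1) (π : S → PMF A)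
    (V W : S → ℝ) (hV : IsValueFun m γ π V) (hW : IsValueFun m γ π W) :
    ∀ s, V s = W s := by
  set M := Finset.univ.sup' Finset.univ_nonempty (fun s : S => |V s - W s|) with hMdef
  have hM : ∀ s, |V s - W s| ≤ M := by
    intro s; rw [hMdef]
    exact Finset.le_sup' (fun s : S => |V s - W s|) (Finset.mem_univ s)
  have hcontr : ∀ s, |V s - W s| ≤ γ * M := by
    intro s
    rw [← hV s, ← hW s]
    have : bellman m γ π V s - bellman m γ π W s
        = ∑ a : A, (π s a).toReal * (expVal m γ V s a - expVal m γ W s a) := by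
      unfold bellman; rw [← Finset.sum_sub_distrib]; congr 1; ext a; ring
    rw [this]
    calc |∑ a : A, (π s a).toReal * (expVal m γ V s a - expVal m γ W s a)|
        ≤ ∑ a : A, |(π s a).toReal * (expVal m γ V s a - expVal m γ W s a)| :=
          Finset.abs_sum_le_sum_abs _ _
      _ ≤ ∑ a : A, (π s a).toReal * (γ * M) := by
          apply Finset.sum_le_sum; intro a _
          rw [abs_mul, abs_of_nonneg ENNReal.toReal_nonneg]
          exact mul_le_mul_of_nonneg_left
            (expVal_diff_le m γ hγ0 V W M hM s a) ENNReal.toReal_nonneg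
      _ = γ * M := by rw [← Finset.sum_mul, sum_pmf_toReal_one, one_mul]
  have hMle : M ≤ γ * M := by
    obtain ⟨s, _, hs⟩ := Finset.exists_mem_eq_sup' (Finset.univ_nonempty (α := S))
      (fun s : S => |V s - W s|)
    calc M = |V s - W s| := hMdef.trans hs
      _ ≤ γ * M := hcontr s
  have hM0 : M ≤ 0 := by nlinarith
  intro s
  have := (hM s).trans hM0
  have := abs_nonneg (V s - W s)
  have : |V s - W s| = 0 := le_antisymm ‹|V s - W s| ≤ 0› ‹0 ≤ |V s - W s|›
  have := abs_eq_zero.mp this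
  linarith

lemma optBellman_unique {S A : Type} [Fintype S] [Nonempty S] [Fintype A] [Nonempty A]
    (m : MDP S A) (γ : ℝ) (hγ0 : 0 ≤ γ) (hγ1 : γ < 1)
    (V W : S → ℝ) (hV : IsOptValueFun m γ V) (hW : IsOptValueFun m γ W) :
    ∀ s, V s = W s := by
  set M := Finset.univ.sup' Finset.univ_nonempty (fun s : S => |V s - W s|) with hMdef
  have hM : ∀ s, |V s - W s| ≤ M := by
    intro s; rw [hMdef]
    exact Finset.le_sup' (fun s : S => |V s - W s|) (Finset.mem_univ s)
  have hcontr : ∀ s, |V s - W s| ≤ γ * M := by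
    intro s
    rw [← hV s, ← hW s]
    rw [abs_sub_le_iff]
    constructor
    · rw [sub_le_iff_le_add]
      apply Finset.sup'_le; intro a _
      have h1 := expVal_diff_le m γ hγ0 V W M hM s a
      have h2 : expVal m γ W s a ≤ optBellman m γ W s :=
        Finset.le_sup' _ (Finset.mem_univ a)
      have := abs_le.mp h1
      unfold optBellman at h2 ⊢; linarith [this.2]
    · rw [sub_le_iff_le_add]
      apply Finset.sup'_le; intro a _
      have h1 := expVal_diff_le m γ hγ0 V W M hM s a
      have h2 : expVal m γ V s a ≤ optBellman m γ V s :=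
        Finset.le_sup' _ (Finset.mem_univ a)
      have := abs_le.mp h1
      unfold optBellman at h2 ⊢; linarith [this.1]
  have hMle : M ≤ γ * M := by
    obtain ⟨s, _, hs⟩ := Finset.exists_mem_eq_sup' (Finset.univ_nonempty (α := S))
      (fun s : S => |V s - W s|)
    calc M = |V s - W s| := hMdef.trans hs
      _ ≤ γ * M := hcontr s
  have hM0 : M ≤ 0 := by nlinarith
  intro s
  have h1 := (hM s).trans hM0
  have h2 := abs_nonneg (V s - W s)
  have := abs_eq_zero.mp (le_antisymm h1 h2)
  linarith

lemma bellman_detPol {S A : Type} [Fintype S] [Fintype A] (m : MDP S A) (γ : ℝ)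
    (g : S → A) (V : S → ℝ) (s : S) :
    bellman m γ (detPol g) V s = expVal m γ V s (g s) := by
  unfold bellman detPol
  rw [Finset.sum_eq_single (g s)]
  · simp [PMF.pure_apply]
  · intro a _ ha
    simp [PMF.pure_apply, ha]
  · simp

/-- **Proposition 3.** If `m̿` is a PNM of `m*` with respect to
`Π̿ = {π_{m̿}^r, π_{m̿}^ce}` and `J`, then `J_{m*}^{π_{m̄}^r} ≥ J_{m*}^{π_{m̿}^ce}`
(in particular, this holds whether `m̄` is a PCM or a PRM of `m*`
w.r.t. `Π̄ = {π_{m̄}^r, π_{m̄}^ce}` and `J`). -/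
theorem pnm_rollout_ge_ce
    {S A : Type} [Fintype S] [Nonempty S] [Fintype A] [Nonempty A]
    (mbar mbb mstar : MDP S A) (γ : ℝ) (hγ0 : 0 ≤ γ) (hγ1 : γ < 1)
    -- rollout policy of some base policy in `m̄`
    (πb1 : S → PMF A) (Vb1 : S → ℝ) (hVb1 : IsValueFun mbar γ πb1 Vb1)
    (πr1 : S → A) (hπr1 : IsGreedyWrt mbar γ Vb1 πr1)
    -- certainty-equivalence policy in `m̄`
    (Vstar1 : S → ℝ) (hVstar1 : IsOptValueFun mbar γ Vstar1)
    (πce1 : S → A) (hπce1 : IsGreedyWrt mbar γ Vstar1 πce1)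
    -- rollout policy of some base policy in `m̿`
    (πb2 : S → PMF A) (Vb2 : S → ℝ) (hVb2 : IsValueFun mbb γ πb2 Vb2)
    (πr2 : S → A) (hπr2 : IsGreedyWrt mbb γ Vb2 πr2)
    -- certainty-equivalence policy in `m̿`
    (Vstar2 : S → ℝ) (hVstar2 : IsOptValueFun mbb γ Vstar2)
    (πce2 : S → A) (hπce2 : IsGreedyWrt mbb γ Vstar2 πce2)
    -- `m̿` is a PNM of `mstar` w.r.t. `Π̿ = {π_{m̿}^r, π_{m̿}^ce}` and `J`
    (hPNM : IsPNM mbb mstar γ {detPol πr2, detPol πce2})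
    -- value functions in `mstar` of `π_{m̄}^r` and `π_{m̿}^ce`
    (Wr1 Wce2 : S → ℝ)
    (hWr1 : IsValueFun mstar γ (detPol πr1) Wr1)
    (hWce2 : IsValueFun mstar γ (detPol πce2) Wce2) :
    Jval mstar Wr1 ≥ Jval mstar Wce2 := by
  -- Vstar2 is a fixed point of the evaluation operator of πce2 in mbb
  have hfix : IsValueFun mbb γ (detPol πce2) Vstar2 := by
    intro s
    rw [bellman_detPol]
    have hle : expVal mbb γ Vstar2 s (πce2 s) ≤ optBellman mbb γ Vstar2 s :=
      Finset.le_sup' _ (Finset.mem_univ (πce2 s))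
    have hge : optBellman mbb γ Vstar2 s ≤ expVal mbb γ Vstar2 s (πce2 s) :=
      Finset.sup'_le _ _ (fun a _ => hπce2 s a)
    rw [← hVstar2 s]
    exact le_antisymm hle hge
  -- hence detPol πce2 is optimal in mbb
  have hopt : IsOptimalIn mbb γ (detPol πce2) := by
    intro V Vstar hV hVstar s
    have h1 := bellman_unique mbb γ hγ0 hγ1 (detPol πce2) V Vstar2 hV hfix
    have h2 := optBellman_unique mbb γ hγ0 hγ1 Vstar Vstar2 hVstar hVstar2
    rw [h1 s, h2 s]
  exact hPNM.2 (detPol πce2) (Or.inr rfl) hopt (detPol πr1) Wce2 Wr1 hWce2 hWr1
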